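/- There exist absolute constants c > 0, ε₀ ∈ (0,1), and n₀ ∈ ℕ such that for every n ≥ n₀, every ε ∈ (0, ε₀], and every b ∈ {0,1}^n with n/3 ≤ ∑_{j=1}^n b_j ≤ 2n/3, the product distribution P_b over {0,1}^n with mean vector ((1 + (−1)^{b_j}·ε)/n)_{j=1,...,n} satisfies ‖P_b − P*‖₁ ≥ c·ε, where P* is the product distribution over {0,1}^n with mean vector (1/n, ..., 1/n). -/

import Mathlib

/-- The product distribution over `{0,1}^n` with mean vector `p`. -/
noncomputable def prodDist {n : ℕ} (p : Fin n → ℝ) : (Fin n → Bool) → ℝ :=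
  fun x => ∏ i, if x i then p i else 1 - p i

/-- The L1 distance between two distributions on a finite set. -/
noncomputable def l1Dist {α : Type*} [Fintype α] (P Q : α → ℝ) : ℝ :=
  ∑ x, |P x - Q x|

/-- Mass of the event "all coordinates outside the support of `b` are false" under a
product distribution. -/
lemma sum_event {n : ℕ} (b : Fin n → Bool) (r : Fin n → ℝ) :
    ∑ x ∈ Finset.univ.filter
        (fun x : Fin n → Bool => ∀ j, b j = false → x j = false),
      prodDist r x = ∏ j, (if b j then (1:ℝ) else 1 - r j) := by
  classical
  have key : ∀ x : Fin n → Bool,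
      (if (∀ j, b j = false → x j = false) then prodDist r x else 0)
        = ∏ j, (if b j = false ∧ x j = true then (0:ℝ)
            else (if x j then r j else 1 - r j)) := by
    intro x
    by_cases h : ∀ j, b j = false → x j = false
    · rw [if_pos h]
      unfold prodDist
      refine Finset.prod_congr rfl fun j _ => ?_
      by_cases hb : b j = false
      · have := h j hb
        simp only [hb, this, true_and, Bool.false_eq_true, if_false]
      · have hb' : (b j = false) = False := by simp [hb]
        simp only [hb', false_and, if_false]
    · simp only [h, if_false]
      push_neg at h
      obtain ⟨j, hbj, hxj⟩ := h
      refine (Finset.prod_eq_zero (Finset.mem_univ j) ?_).symm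
      simp only [Bool.not_eq_false] at hxj
      simp [hbj, hxj]
  rw [Finset.sum_filter]
  simp only [key]
  rw [← Fintype.prod_sum (fun j (y : Bool) =>
      (if b j = false ∧ y = true then (0:ℝ) else (if y then r j else 1 - r j)))]
  refine Finset.prod_congr rfl fun j _ => ?_
  rw [Fintype.sum_bool]
  by_cases hb : b j
  · simp only [hb, Bool.true_eq_false, false_and, if_false, if_true,
      Bool.false_eq_true]; ring
  · simp [hb]

lemma one_sub_ge_exp {x : ℝ} (hx0 : 0 ≤ x) (hx : x ≤ 1/2) :
    Real.exp (-(2*x)) ≤ 1 - x := by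
  have h1 : 1 + 2*x ≤ Real.exp (2*x) := by linarith [Real.add_one_le_exp (2*x)]
  have h2 : (0:ℝ) < 1 + 2*x := by linarith
  have h3 : Real.exp (-(2*x)) = (Real.exp (2*x))⁻¹ := by
    rw [Real.exp_neg]
  rw [h3]
  have h4 : (Real.exp (2*x))⁻¹ ≤ (1 + 2*x)⁻¹ := by
    apply inv_anti₀ h2 h1
  refine h4.trans ?_
  rw [inv_le_iff_one_le_mul₀ h2]
  nlinarith

lemma exp_four_lt : Real.exp 4 < 55 := by
  have h := Real.exp_one_lt_d9
  have h4 : Real.exp 4 = Real.exp 1 ^ (4:ℕ) := by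
    rw [← Real.exp_nat_mul]; norm_num
  rw [h4]
  have : Real.exp 1 ^ (4:ℕ) < 2.7182818286 ^ (4:ℕ) := by
    apply pow_lt_pow_left₀ h (le_of_lt (Real.exp_pos 1)) (by norm_num)
  nlinarith [this]

theorem stmt10 : ∃ c : ℝ, 0 < c ∧ ∃ ε₀ ∈ Set.Ioo (0:ℝ) 1, ∃ n₀ : ℕ,
    ∀ n : ℕ, n₀ ≤ n → ∀ ε : ℝ, ε ∈ Set.Ioc (0:ℝ) ε₀ → ∀ b : Fin n → Bool,
      (n : ℝ) / 3 ≤ ∑ j, (if b j then (1:ℝ) else 0) →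
      (∑ j, (if b j then (1:ℝ) else 0)) ≤ 2 * n / 3 →
      c * ε ≤ l1Dist
          (prodDist (fun j => (1 + (if b j then -ε else ε)) / n))
          (prodDist (fun _ : Fin n => 1 / n)) := by
  classical
  refine ⟨1/165, by norm_num, 1/2, by norm_num, 4, ?_⟩
  intro n hn ε hε b hlow hhigh
  obtain ⟨hε0, hε2⟩ := hε
  have hn4 : (4:ℝ) ≤ n := by exact_mod_cast hn
  have hnpos : (0:ℝ) < n := by linarith
  set P : (Fin n → Bool) → ℝ := prodDist (fun j => (1 + (if b j then -ε else ε)) / n) with hP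
  set Q : (Fin n → Bool) → ℝ := prodDist (fun _ : Fin n => 1 / n) with hQ
  set A : Finset (Fin n → Bool) :=
    Finset.univ.filter (fun x : Fin n → Bool => ∀ j, b j = false → x j = false) with hA
  set m : ℕ := (Finset.univ.filter (fun j : Fin n => b j = false)).card with hm
  -- counting
  have hcount : ∑ j, (if b j then (1:ℝ) else 0)
      = ((Finset.univ.filter (fun j : Fin n => b j = true)).card : ℝ) := by
    rw [Finset.sum_boole]
  have hsplit : (Finset.univ.filter (fun j : Fin n => b j = true)).card + m = n := by
    rw [hm]
    have h2 : (Finset.univ.filter (fun j : Fin n => b j = false))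
        = (Finset.univ.filter (fun j : Fin n => ¬ (b j = true))) := by
      apply Finset.filter_congr
      intro j _
      simp
    rw [h2]
    have := Finset.card_filter_add_card_filter_not
      (s := (Finset.univ : Finset (Fin n))) (p := fun j : Fin n => b j = true)
    simpa using this
  have hmlow : (n:ℝ)/3 ≤ (m:ℝ) := by
    have : ((Finset.univ.filter (fun j : Fin n => b j = true)).card : ℝ) + (m:ℝ) = n := by
      exact_mod_cast hsplit
    rw [hcount] at hhigh
    linarith
  have hmhigh : (m:ℝ) ≤ n := by
    have : ((Finset.univ.filter (fun j : Fin n => b j = true)).card : ℝ) + (m:ℝ) = n := by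
      exact_mod_cast hsplit
    have h0 : (0:ℝ) ≤ ((Finset.univ.filter (fun j : Fin n => b j = true)).card : ℝ) := by
      positivity
    linarith
  -- values
  set a : ℝ := 1 - 1/n with ha
  set t : ℝ := 1 - (1+ε)/n with ht
  have htpos : 0 < t := by
    rw [ht]
    have : (1+ε)/n ≤ (3/2)/4 := by
      apply div_le_div₀ (by norm_num) (by linarith) (by norm_num) hn4
    linarith
  have hta : t ≤ a := by
    rw [ht, ha]
    have : 1/n ≤ (1+ε)/n := by
      gcongr
      linarith
    linarith
  -- constant-factor product over false coordinates
  have hconst : ∀ (r : Fin n → ℝ) (v : ℝ), (∀ j, b j = false → r j = v) →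
      ∏ j, (if b j then (1:ℝ) else 1 - r j) = (1 - v) ^ m := by
    intro r v hr
    rw [← Finset.prod_filter_mul_prod_filter_not Finset.univ (fun j => b j = false)]
    have h1 : ∏ j ∈ Finset.univ.filter (fun j : Fin n => b j = false),
        (if b j then (1:ℝ) else 1 - r j) = (1 - v) ^ m := by
      rw [show ((1:ℝ) - v) ^ m = ∏ _j ∈ Finset.univ.filter (fun j : Fin n => b j = false),
          ((1:ℝ) - v) by rw [Finset.prod_const, ← hm]]
      refine Finset.prod_congr rfl fun j hj => ?_
      rw [Finset.mem_filter] at hj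
      rw [hr j hj.2, hj.2]
      simp
    have h2 : ∏ j ∈ Finset.univ.filter (fun j : Fin n => ¬ (b j = false)),
        (if b j then (1:ℝ) else 1 - r j) = 1 := by
      apply Finset.prod_eq_one
      intro j hj
      rw [Finset.mem_filter] at hj
      have : b j = true := by
        cases hb : b j
        · exact absurd hb hj.2
        · rfl
      simp [this]
    rw [h1, h2, mul_one]
  have hPA : ∑ x ∈ A, P x = t ^ m := by
    rw [hP, hA, sum_event, hconst _ ((1+ε)/n) ?_]
    intro j hj
    simp [hj]
  have hQA : ∑ x ∈ A, Q x = a ^ m := by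
    rw [hQ, hA, sum_event, hconst _ (1/n) (fun j _ => rfl)]
  -- L1 lower bound via the event A
  have h1 : a ^ m - t ^ m ≤ ∑ x ∈ A, |P x - Q x| := by
    have hsum : ∑ x ∈ A, (P x - Q x) = t ^ m - a ^ m := by
      rw [Finset.sum_sub_distrib, hPA, hQA]
    have habs : a ^ m - t ^ m ≤ |∑ x ∈ A, (P x - Q x)| := by
      rw [hsum, abs_sub_comm]
      exact le_abs_self _
    exact habs.trans (Finset.abs_sum_le_sum_abs _ _)
  have h2 : ∑ x ∈ A, |P x - Q x| ≤ l1Dist P Q := by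
    apply Finset.sum_le_sum_of_subset_of_nonneg (Finset.subset_univ A)
    intro x _ _
    exact abs_nonneg _
  -- geometric lower bound for a^m - t^m
  have hgeom : (ε/n) * ((m:ℝ) * t^(m-1)) ≤ a ^ m - t ^ m := by
    have hid := geom_sum₂_mul a t m
    have hat : a - t = ε/n := by
      rw [ha, ht]
      field_simp
      ring
    have hterm : ∀ i ∈ Finset.range m, t^(m-1) ≤ a^i * t^(m-1-i) := by
      intro i hi
      rw [Finset.mem_range] at hi
      have hsplit2 : t^(m-1) = t^i * t^(m-1-i) := by
        rw [← pow_add]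
        congr 1
        omega
      rw [hsplit2]
      gcongr
    have hsum : (m:ℝ) * t^(m-1) ≤ ∑ i ∈ Finset.range m, a^i * t^(m-1-i) := by
      calc (m:ℝ) * t^(m-1) = ∑ _i ∈ Finset.range m, t^(m-1) := by
            rw [Finset.sum_const, Finset.card_range, nsmul_eq_mul]
        _ ≤ _ := Finset.sum_le_sum hterm
    calc (ε/n) * ((m:ℝ) * t^(m-1)) = ((m:ℝ) * t^(m-1)) * (a - t) := by rw [hat]; ring
      _ ≤ (∑ i ∈ Finset.range m, a^i * t^(m-1-i)) * (a - t) := by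
          apply mul_le_mul_of_nonneg_right hsum
          rw [hat]; positivity
      _ = a ^ m - t ^ m := hid
  -- exponential lower bound for t^(m-1)
  have hexp : Real.exp (-4) ≤ t^(m-1) := by
    have h2n : (2:ℝ)/n ≤ 1/2 := by
      rw [div_le_div_iff₀ hnpos (by norm_num)]
      linarith
    have hbase : Real.exp (-(4/n)) ≤ t := by
      have hkey := one_sub_ge_exp (x := 2/n) (by positivity) h2n
      have htt : 1 - 2/n ≤ t := by
        rw [ht]
        have : (1+ε)/n ≤ 2/n := by gcongr; linarith
        linarith
      have heq : -(4/(n:ℝ)) = -(2*(2/n)) := by ring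
      rw [heq]
      exact hkey.trans htt
    have hstep : Real.exp (-4) ≤ Real.exp (-(4/n)) ^ (m-1) := by
      rw [← Real.exp_nat_mul]
      apply Real.exp_le_exp.mpr
      have hm1 : ((m-1:ℕ):ℝ) ≤ n := by
        have h1' : ((m-1:ℕ):ℝ) ≤ (m:ℝ) := by exact_mod_cast Nat.sub_le m 1
        linarith
      have hm0 : (0:ℝ) ≤ ((m-1:ℕ):ℝ) := Nat.cast_nonneg _
      have hq : ((m-1:ℕ):ℝ) * (4/n) ≤ (n:ℝ) * (4/n) :=
        mul_le_mul_of_nonneg_right hm1 (by positivity)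
      have hq2 : (n:ℝ) * (4/n) = 4 := by field_simp
      nlinarith [hq, hq2]
    refine hstep.trans ?_
    apply pow_le_pow_left₀ (Real.exp_pos _).le hbase
  have hexp4 : (1:ℝ)/55 ≤ Real.exp (-4) := by
    rw [Real.exp_neg, one_div]
    exact inv_anti₀ (Real.exp_pos 4) exp_four_lt.le
  have h5 : (1:ℝ)/55 ≤ t^(m-1) := hexp4.trans hexp
  calc (1:ℝ)/165 * ε = (ε/n) * (((n:ℝ)/3) * (1/55)) := by
        field_simp
        ring_nf
    _ ≤ (ε/n) * ((m:ℝ) * t^(m-1)) := by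
        apply mul_le_mul_of_nonneg_left ?_ (by positivity)
        apply mul_le_mul hmlow h5 (by norm_num) (Nat.cast_nonneg _)
    _ ≤ a ^ m - t ^ m := hgeom
    _ ≤ ∑ x ∈ A, |P x - Q x| := h1
    _ ≤ l1Dist P Q := h2
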